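/- arXiv:2308.11163 — 2 statements merged into one kernel-verified Lean document; each statement's English description precedes it below -/
import Mathlib

section
/- Let C be a chain component of a continuous f : X → X on a compact metric space, δ > 0, g = f|_C, and let the δ-cyclic decomposition D_0, …, D_{m−1} of C be the equivalence classes of ∼_{C,δ}, indexed so that D_i contains g^i(x) for a fixed x ∈ C. Then each D_i is open and closed in C, g(D_i) = D_{i+1 mod m}, D_m = D_0, and C is the disjoint union of D_0, …, D_{m−1}. -/
open Filter Topology Metric Set

variable {X : Type*} [MetricSpace X]

/-- There is a `δ`-chain of `f` from `x` to `y`. -/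
def ChainReach (f : X → X) (δ : ℝ) (x y : X) : Prop :=
  ∃ k : ℕ, 0 < k ∧ ∃ c : ℕ → X, c 0 = x ∧ c k = y ∧
    ∀ i < k, dist (f (c i)) (c (i + 1)) ≤ δ

/-- `x → y` : for every `δ > 0` there is a `δ`-chain from `x` to `y`. -/
def ChainTo (f : X → X) (x y : X) : Prop := ∀ δ > 0, ChainReach f δ x y

/-- The chain recurrent set. -/
def CR (f : X → X) : Set X := {x | ChainTo f x x}

/-- The relation `x ↔ y`. -/
def ChainRel (f : X → X) (x y : X) : Prop := ChainTo f x y ∧ ChainTo f y x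

/-- A chain component: an equivalence class of `↔` on `CR f`. -/
def IsChainComponent (f : X → X) (C : Set X) : Prop :=
  ∃ x ∈ CR f, C = {y | y ∈ CR f ∧ ChainRel f x y}

/-- A `δ`-chain of `f` from `x` to `y` of length `k`, all of whose points lie in `S`. -/
def ChainInLen (f : X → X) (S : Set X) (δ : ℝ) (x y : X) (k : ℕ) : Prop :=
  0 < k ∧ ∃ c : ℕ → X, (∀ i ≤ k, c i ∈ S) ∧ c 0 = x ∧ c k = y ∧
    ∀ i < k, dist (f (c i)) (c (i + 1)) ≤ δ

/-- There is a `δ`-chain from `x` to `y` inside `S`. -/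
def ChainInReach (f : X → X) (S : Set X) (δ : ℝ) (x y : X) : Prop :=
  ∃ k, ChainInLen f S δ x y k

/-- `f` restricted to `S` is chain transitive. -/
def ChainTransitiveOn (f : X → X) (S : Set X) : Prop :=
  ∀ x ∈ S, ∀ y ∈ S, ∀ δ > 0, ChainInReach f S δ x y

/-- The set of lengths of `δ`-cycles of `f` restricted to `C`. -/
def cycLengths (f : X → X) (C : Set X) (δ : ℝ) : Set ℕ :=
  {k | ∃ x ∈ C, ChainInLen f C δ x x k}

section Basic
variable {X : Type*} [MetricSpace X] {f : X → X} {S : Set X} {δ δ₁ : ℝ}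

lemma chainReach_mono (h : δ₁ ≤ δ) {a b : X} (hc : ChainReach f δ₁ a b) :
    ChainReach f δ a b := by
  obtain ⟨k, hk, c, h0, hk', hj⟩ := hc
  exact ⟨k, hk, c, h0, hk', fun i hi => (hj i hi).trans h⟩

lemma chainReach_seg {c : ℕ → X} {k : ℕ}
    (hc : ∀ i < k, dist (f (c i)) (c (i+1)) ≤ δ) {i j : ℕ} (hij : i < j) (hjk : j ≤ k) :
    ChainReach f δ (c i) (c j) :=
  ⟨j - i, by omega, fun n => c (i + n), by simp, by show c (i + (j - i)) = c j; rw [Nat.add_sub_cancel' hij.le],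
    fun n hn => hc (i + n) (by omega)⟩

lemma ChainReach.trans {a b c : X}
    (h1 : ChainReach f δ a b) (h2 : ChainReach f δ b c) : ChainReach f δ a c := by
  obtain ⟨k, hk, p, hp0, hpk, hpj⟩ := h1
  obtain ⟨l, hl, q, hq0, hql, hqj⟩ := h2
  refine ⟨k + l, by omega, fun n => if n < k then p n else q (n - k), ?_, ?_, ?_⟩
  · simp [hk, hp0]
  · simp [hql, show ¬ (k + l < k) by omega]
  · intro i hi
    by_cases h : i < k
    · simp only [if_pos h]
      by_cases h' : i + 1 < k
      · simpa [if_pos h'] using hpj i h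
      · have e : i + 1 = k := by omega
        have : q (i + 1 - k) = p (i + 1) := by
          rw [show i + 1 - k = 0 by omega, hq0, ← hpk, e]
        simp only [if_neg h']
        rw [this]; exact hpj i h
    · simp only [if_neg h, if_neg (show ¬ i + 1 < k by omega)]
      have := hqj (i - k) (by omega)
      have e : i + 1 - k = (i - k) + 1 := by omega
      rw [e]; exact this

lemma chainReach_tweak_end {a b b' : X}
    (h : ChainReach f δ₁ a b) (hd : δ₁ + dist b b' ≤ δ) (hδ : δ₁ ≤ δ) :
    ChainReach f δ a b' := by
  obtain ⟨k, hk, c, h0, hk', hj⟩ := h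
  refine ⟨k, hk, fun n => if n = k then b' else c n, by simp [show (0:ℕ) ≠ k by omega, h0],
    by simp, ?_⟩
  intro i hi
  simp only [if_neg (show i ≠ k by omega)]
  by_cases h' : i + 1 = k
  · simp only [if_pos h']
    calc dist (f (c i)) b' ≤ dist (f (c i)) (c (i+1)) + dist (c (i+1)) b' := dist_triangle _ _ _
    _ ≤ δ₁ + dist b b' := by
        have e : c (i+1) = b := by rw [h', hk']
        have h2 := hj i hi; rw [e] at h2 ⊢; exact add_le_add_left h2 _
    _ ≤ δ := hd
  · simp only [if_neg h']
    exact (hj i hi).trans hδ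

lemma chainReach_tweak_start {q a p : X}
    (h : ChainReach f δ₁ q a) (hd : dist (f p) (f q) + δ₁ ≤ δ) (hδ : δ₁ ≤ δ) :
    ChainReach f δ p a := by
  obtain ⟨k, hk, c, h0, hk', hj⟩ := h
  refine ⟨k, hk, fun n => if n = 0 then p else c n, by simp,
    by simp [show k ≠ 0 by omega, hk'], ?_⟩
  intro i hi
  by_cases h' : i = 0
  · subst h'
    simp only [if_pos rfl, if_neg (show (1:ℕ) ≠ 0 by omega)]
    calc dist (f p) (c 1) ≤ dist (f p) (f q) + dist (f q) (c 1) := dist_triangle _ _ _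
    _ ≤ dist (f p) (f q) + δ₁ := by
        have := hj 0 hi; rw [h0] at this; exact add_le_add_right this _
    _ ≤ δ := hd
  · simp only [if_neg h', if_neg (show i + 1 ≠ 0 by omega)]
    exact (hj i hi).trans hδ

lemma ChainInLen.mono (h : δ₁ ≤ δ) {a b : X} {k : ℕ} (hc : ChainInLen f S δ₁ a b k) :
    ChainInLen f S δ a b k := by
  obtain ⟨hk, c, hmem, h0, hk', hj⟩ := hc
  exact ⟨hk, c, hmem, h0, hk', fun i hi => (hj i hi).trans h⟩

lemma ChainInLen.mem_left {a b : X} {k : ℕ} (hc : ChainInLen f S δ a b k) : a ∈ S := by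
  obtain ⟨hk, c, hmem, h0, hk', hj⟩ := hc
  rw [← h0]; exact hmem 0 (by omega)

lemma ChainInLen.mem_right {a b : X} {k : ℕ} (hc : ChainInLen f S δ a b k) : b ∈ S := by
  obtain ⟨hk, c, hmem, h0, hk', hj⟩ := hc
  rw [← hk']; exact hmem k le_rfl

lemma ChainInLen.trans {a b c : X} {k l : ℕ}
    (h1 : ChainInLen f S δ a b k) (h2 : ChainInLen f S δ b c l) :
    ChainInLen f S δ a c (k + l) := by
  obtain ⟨hk, p, hpm, hp0, hpk, hpj⟩ := h1
  obtain ⟨hl, q, hqm, hq0, hql, hqj⟩ := h2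
  refine ⟨by omega, fun n => if n < k then p n else q (n - k), ?_, ?_, ?_, ?_⟩
  · intro i hi
    by_cases h : i < k
    · simp only [if_pos h]; exact hpm i (by omega)
    · simp only [if_neg h]; exact hqm (i - k) (by omega)
  · simp [hk, hp0]
  · simp [hql, show ¬ (k + l < k) by omega]
  · intro i hi
    by_cases h : i < k
    · simp only [if_pos h]
      by_cases h' : i + 1 < k
      · simpa [if_pos h'] using hpj i h
      · have e : i + 1 = k := by omega
        have : q (i + 1 - k) = p (i + 1) := by
          rw [show i + 1 - k = 0 by omega, hq0, ← hpk, e]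
        simp only [if_neg h']
        rw [this]; exact hpj i h
    · simp only [if_neg h, if_neg (show ¬ i + 1 < k by omega)]
      have := hqj (i - k) (by omega)
      have e : i + 1 - k = (i - k) + 1 := by omega
      rw [e]; exact this

lemma chainInLen_tweak_end {a b b' : X} {k : ℕ}
    (h : ChainInLen f S δ₁ a b k) (hb' : b' ∈ S) (hd : δ₁ + dist b b' ≤ δ) (hδ : δ₁ ≤ δ) :
    ChainInLen f S δ a b' k := by
  obtain ⟨hk, c, hmem, h0, hk', hj⟩ := h
  refine ⟨hk, fun n => if n = k then b' else c n, ?_,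
    by simp [show (0:ℕ) ≠ k by omega, h0], by simp, ?_⟩
  · intro i hi
    by_cases h' : i = k
    · simp [h', hb']
    · simp only [if_neg h']; exact hmem i hi
  · intro i hi
    simp only [if_neg (show i ≠ k by omega)]
    by_cases h' : i + 1 = k
    · simp only [if_pos h']
      calc dist (f (c i)) b' ≤ dist (f (c i)) (c (i+1)) + dist (c (i+1)) b' :=
        dist_triangle _ _ _
      _ ≤ δ₁ + dist b b' := by
          have e : c (i+1) = b := by rw [h', hk']
          have h2 := hj i hi; rw [e] at h2 ⊢; exact add_le_add_left h2 _
      _ ≤ δ := hd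
    · simp only [if_neg h']
      exact (hj i hi).trans hδ

lemma chainInLen_orbit (hδ : 0 ≤ δ) (hS : ∀ y ∈ S, f y ∈ S)
    {a : X} (ha : a ∈ S) {k : ℕ} (hk : 0 < k) : ChainInLen f S δ a (f^[k] a) k := by
  have hmem : ∀ i, f^[i] a ∈ S := by
    intro i
    induction i with
    | zero => simpa using ha
    | succ n ih => rw [Function.iterate_succ_apply']; exact hS _ ih
  exact ⟨hk, fun i => f^[i] a, fun i _ => hmem i, rfl, rfl,
    fun i hi => by show dist (f (f^[i] a)) (f^[i+1] a) ≤ δ; simp [Function.iterate_succ_apply', hδ]⟩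

lemma ChainTo.trans {a b c : X} (h1 : ChainTo f a b) (h2 : ChainTo f b c) :
    ChainTo f a c := fun δ hδ => (h1 δ hδ).trans (h2 δ hδ)

lemma mem_component {C : Set X} {x0 : X}
    (hCeq : C = {y | y ∈ CR f ∧ ChainRel f x0 y}) {p a : X} (ha : a ∈ C)
    (h1 : ChainTo f a p) (h2 : ChainTo f p a) : p ∈ C := by
  rw [hCeq] at ha ⊢
  obtain ⟨haCR, hxa, hax⟩ := ha
  exact ⟨h2.trans h1, hxa.trans h1, h2.trans hax⟩

lemma component_chainTo {C : Set X} {x0 : X}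
    (hCeq : C = {y | y ∈ CR f ∧ ChainRel f x0 y}) {a b : X} (ha : a ∈ C) (hb : b ∈ C) :
    ChainTo f a b := by
  rw [hCeq] at ha hb
  exact ha.2.2.trans hb.2.1

end Basic

section Compact
variable {X : Type*} [MetricSpace X] [CompactSpace X] {f : X → X}

lemma uc_le (hf : Continuous f) {ε : ℝ} (hε : 0 < ε) :
    ∃ η > 0, ∀ u v : X, dist u v ≤ η → dist (f u) (f v) ≤ ε := by
  have h := CompactSpace.uniformContinuous_of_continuous hf
  rw [Metric.uniformContinuous_iff] at h
  obtain ⟨η, hη, h⟩ := h ε hε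
  exact ⟨η/2, by positivity, fun u v huv => (h (lt_of_le_of_lt huv (by linarith))).le⟩

lemma chains_near (hf : Continuous f) {C : Set X} {x0 a : X}
    (hCeq : C = {y | y ∈ CR f ∧ ChainRel f x0 y}) (ha : a ∈ C)
    {U : Set X} (hU : IsOpen U) (hCU : C ⊆ U) :
    ∃ ε > 0, ∀ p, ChainReach f ε a p → ChainReach f ε p a → p ∈ U := by
  by_contra hcon
  push_neg at hcon
  set B : ℕ → Set X := fun n =>
    {p | ChainReach f (1/(n+1)) a p ∧ ChainReach f (1/(n+1)) p a} with hB
  set K : ℕ → Set X := fun n => closure (B n) ∩ Uᶜ with hK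
  have hpos : ∀ n : ℕ, (0:ℝ) < 1/(n+1) := fun n => by positivity
  have hKne : ∀ n, (K n).Nonempty := by
    intro n
    obtain ⟨p, h1, h2, h3⟩ := hcon (1/(n+1)) (hpos n)
    exact ⟨p, subset_closure ⟨h1, h2⟩, h3⟩
  have hKanti : ∀ n, K (n+1) ⊆ K n := by
    intro n
    have hle : (1:ℝ)/(n+1+1) ≤ 1/(n+1) := by
      apply one_div_le_one_div_of_le (by positivity); push_cast; linarith
    have hBsub : B (n+1) ⊆ B n := fun p hp => by
      constructor
      · exact chainReach_mono (by push_cast at hle ⊢; convert hle using 2 <;> ring) hp.1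
      · exact chainReach_mono (by push_cast at hle ⊢; convert hle using 2 <;> ring) hp.2
    exact inter_subset_inter (closure_mono hBsub) le_rfl
  have hKcl : ∀ n, IsClosed (K n) := fun n => isClosed_closure.inter hU.isClosed_compl
  obtain ⟨p, hp⟩ := IsCompact.nonempty_iInter_of_sequence_nonempty_isCompact_isClosed K
    hKanti hKne (hKcl 0).isCompact hKcl
  simp only [mem_iInter] at hp
  have hpU : p ∉ U := (hp 0).2
  have hpcl : ∀ n : ℕ, p ∈ closure (B n) := fun n => (hp n).1
  have h1 : ChainTo f a p := by
    intro d hd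
    obtain ⟨n, hn⟩ := exists_nat_one_div_lt (show (0:ℝ) < d/2 by linarith)
    obtain ⟨q, hq, hqd⟩ := Metric.mem_closure_iff.mp (hpcl n) (d/2) (by linarith)
    refine chainReach_tweak_end hq.1 ?_ ?_
    · have : dist q p < d/2 := by rwa [dist_comm]
      push_cast at hn ⊢; linarith
    · push_cast at hn ⊢; linarith
  have h2 : ChainTo f p a := by
    intro d hd
    obtain ⟨ρ, hρ, hcont⟩ := Metric.continuous_iff.mp hf p (d/2) (by linarith)
    obtain ⟨n, hn⟩ := exists_nat_one_div_lt (show (0:ℝ) < d/2 by linarith)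
    obtain ⟨q, hq, hqd⟩ := Metric.mem_closure_iff.mp (hpcl n) ρ hρ
    refine chainReach_tweak_start hq.2 ?_ ?_
    · have : dist (f q) (f p) < d/2 := hcont q (by rwa [dist_comm])
      rw [dist_comm (f p)]
      push_cast at hn ⊢; linarith
    · push_cast at hn ⊢; linarith
  exact hpU (hCU (mem_component hCeq ha h1 h2))

end Compact

section Compact2
variable {X : Type*} [MetricSpace X] [CompactSpace X] {f : X → X}

lemma chainTo_self_image {a : X} : ChainTo f a (f a) := by
  intro d hd
  refine ⟨1, one_pos, fun i => if i = 0 then a else f a, by simp, by simp, ?_⟩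
  intro i hi
  interval_cases i
  simp [hd.le]

lemma component_maps (hf : Continuous f) {C : Set X} {x0 : X}
    (hCeq : C = {y | y ∈ CR f ∧ ChainRel f x0 y}) {a : X} (ha : a ∈ C) : f a ∈ C := by
  refine mem_component hCeq ha chainTo_self_image ?_
  intro d hd
  obtain ⟨η0, hη0, huc⟩ := uc_le hf (show (0:ℝ) < d/2 by linarith)
  set ε := min η0 (d/2) with hε
  have hεpos : 0 < ε := lt_min hη0 (by linarith)
  have hεη : ε ≤ η0 := min_le_left _ _
  have hεd : ε ≤ d/2 := min_le_right _ _
  have haCR : a ∈ CR f := (hCeq ▸ ha).1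
  obtain ⟨k, hk, c, hc0, hck, hcj⟩ := haCR ε hεpos
  rcases Nat.lt_or_ge k 2 with hk2 | hk2
  · -- k = 1
    have hk1 : k = 1 := by omega
    subst hk1
    have h01 : dist (f a) a ≤ ε := by
      have := hcj 0 one_pos; rwa [hc0, hck] at this
    refine ⟨1, one_pos, fun i => if i = 0 then f a else a, by simp, by simp, ?_⟩
    intro i hi
    interval_cases i
    simp only [if_pos rfl, if_neg one_ne_zero]
    calc dist (f (f a)) a ≤ dist (f (f a)) (f a) + dist (f a) a := dist_triangle _ _ _
    _ ≤ d/2 + d/2 := add_le_add (huc _ _ (h01.trans hεη)) (h01.trans hεd)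
    _ = d := by ring
  · refine ⟨k - 1, by omega, fun i => if i = 0 then f a else c (i+1), by simp, ?_, ?_⟩
    · simp only [if_neg (show k - 1 ≠ 0 by omega)]
      rw [show k - 1 + 1 = k by omega, hck]
    · intro i hi
      by_cases h0 : i = 0
      · subst h0
        simp only [if_pos rfl, if_neg one_ne_zero]
        have h1 : dist (f a) (c 1) ≤ ε := by have := hcj 0 (by omega); rwa [hc0] at this
        calc dist (f (f a)) (c 2)
            ≤ dist (f (f a)) (f (c 1)) + dist (f (c 1)) (c 2) := dist_triangle _ _ _
        _ ≤ d/2 + d/2 := add_le_add (huc _ _ (h1.trans hεη))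
            ((hcj 1 (by omega)).trans hεd)
        _ = d := by ring
      · simp only [if_neg h0, if_neg (show i + 1 ≠ 0 by omega)]
        exact (hcj (i+1) (by omega)).trans (hεd.trans (by linarith))

lemma component_surj (hf : Continuous f) {C : Set X} {x0 : X}
    (hCeq : C = {y | y ∈ CR f ∧ ChainRel f x0 y}) {z : X} (hz : z ∈ C) :
    ∃ w ∈ C, f w = z := by
  have hzCR : z ∈ CR f := (hCeq ▸ hz).1
  have hchain : ∀ n : ℕ, ChainReach f (1/(n+1)) z z := fun n => hzCR _ (by positivity)
  choose k hk c hc0 hck hcj using hchain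
  set w : ℕ → X := fun n => c n (k n - 1) with hwdef
  have hw : ∀ n, dist (f (w n)) z ≤ 1/(n+1) := by
    intro n
    have h := hcj n (k n - 1) (by have := hk n; omega)
    rwa [show k n - 1 + 1 = k n by have := hk n; omega, hck n] at h
  obtain ⟨w', -, φ, hφ, hconv⟩ := isCompact_univ.tendsto_subseq (fun n => mem_univ (w n))
  have hmono : ∀ j : ℕ, (1:ℝ)/(φ j + 1) ≤ 1/(j+1) := by
    intro j
    apply one_div_le_one_div_of_le (by positivity)
    have h' : j ≤ φ j := hφ.le_apply
    exact_mod_cast add_le_add_left (Nat.cast_le.mpr h') 1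
  have hfz : f w' = z := by
    have h1 : Tendsto (fun j => f (w (φ j))) atTop (𝓝 (f w')) := (hf.tendsto w').comp hconv
    have h2 : Tendsto (fun j => f (w (φ j))) atTop (𝓝 z) := by
      rw [tendsto_iff_dist_tendsto_zero]
      apply squeeze_zero (fun j => dist_nonneg)
        (fun j => (hw (φ j)).trans (hmono j))
      exact tendsto_one_div_add_atTop_nhds_zero_nat
    exact tendsto_nhds_unique h1 h2
  refine ⟨w', ?_, hfz⟩
  refine mem_component hCeq hz ?_ ?_
  · -- ChainTo z w'
    intro d hd
    obtain ⟨n0, hn0⟩ := exists_nat_one_div_lt (show (0:ℝ) < d/2 by linarith)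
    obtain ⟨N, hN⟩ := Metric.tendsto_atTop.mp hconv (d/2) (by linarith)
    set j := max N n0 with hj
    set n := φ j with hn
    have hd1 : (1:ℝ)/(n+1) < d/2 := by
      refine lt_of_le_of_lt ((hmono j).trans ?_) hn0
      apply one_div_le_one_div_of_le (by positivity)
      have : (n0:ℝ) ≤ j := by exact_mod_cast le_max_right N n0
      linarith
    have hd2 : dist (w n) w' < d/2 := hN j (le_max_left _ _)
    rcases Nat.lt_or_ge (k n) 2 with hk2 | hk2
    · have hk1 : k n = 1 := by have := hk n; omega
      have hwz : w n = z := by rw [hwdef]; simp only [hk1]; exact hc0 n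
      refine ⟨1, one_pos, fun i => if i = 0 then z else w', by simp, by simp, ?_⟩
      intro i hi
      interval_cases i
      simp only [if_pos rfl, if_neg one_ne_zero]
      calc dist (f z) w' ≤ dist (f z) z + dist z w' := dist_triangle _ _ _
      _ ≤ 1/(n+1) + d/2 := by
          have h3 := hw n; rw [hwz] at h3
          have h4 := hd2; rw [hwz] at h4
          exact add_le_add h3 h4.le
      _ ≤ d := by linarith
    · have hreach : ChainReach f (1/(n+1)) z (w n) := by
        have := chainReach_seg (hcj n) (show 0 < k n - 1 by omega) (show k n - 1 ≤ k n by omega)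
        rwa [hc0 n] at this
      refine chainReach_tweak_end hreach ?_ (by linarith)
      linarith [hd2.le]
  · -- ChainTo w' z
    intro d hd
    refine ⟨1, one_pos, fun i => if i = 0 then w' else z, by simp, by simp, ?_⟩
    intro i hi
    interval_cases i
    simp [hfz, hd.le]

end Compact2

section Compact3
variable {X : Type*} [MetricSpace X] [CompactSpace X] {f : X → X}

lemma component_chainInReach (hf : Continuous f) {C : Set X} {x0 : X}
    (hCeq : C = {y | y ∈ CR f ∧ ChainRel f x0 y}) {a b : X} (ha : a ∈ C) (hb : b ∈ C)
    {d : ℝ} (hd : 0 < d) : ∃ k, ChainInLen f C d a b k := by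
  obtain ⟨η0, hη0, huc⟩ := uc_le hf (show (0:ℝ) < d/3 by linarith)
  set η := min η0 (d/3) with hηdef
  have hηpos : 0 < η := lt_min hη0 (by linarith)
  have hηa : η ≤ η0 := min_le_left _ _
  have hηb : η ≤ d/3 := min_le_right _ _
  set U := ⋃ q ∈ C, ball q η with hUdef
  have hUopen : IsOpen U := isOpen_biUnion fun q _ => isOpen_ball
  have hCU : C ⊆ U := fun q hq => mem_biUnion hq (mem_ball_self hηpos)
  obtain ⟨ε0, hε0, hnear⟩ := chains_near hf hCeq ha hUopen hCU
  set ε := min ε0 η with hεdef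
  have hεpos : 0 < ε := lt_min hε0 hηpos
  have hεε0 : ε ≤ ε0 := min_le_left _ _
  have hεη : ε ≤ η := min_le_right _ _
  obtain ⟨k₁, hk₁, c₁, hc₁0, hc₁k, hc₁j⟩ := component_chainTo hCeq ha hb ε hεpos
  obtain ⟨k₂, hk₂, c₂, hc₂0, hc₂k, hc₂j⟩ := component_chainTo hCeq hb ha ε hεpos
  set k := k₁ + k₂ with hkdef
  set e : ℕ → X := fun n => if n < k₁ then c₁ n else c₂ (n - k₁) with hedef
  have he0 : e 0 = a := by simp [hedef, hk₁, hc₁0]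
  have hek : e k = a := by
    simp [hedef, hkdef, show ¬ (k₁ + k₂ < k₁) by omega, hc₂k]
  have hek₁ : e k₁ = b := by simp [hedef, hc₂0]
  have hej : ∀ i < k, dist (f (e i)) (e (i+1)) ≤ ε := by
    intro i hi
    simp only [hedef]
    by_cases h : i < k₁
    · simp only [if_pos h]
      by_cases h' : i + 1 < k₁
      · simpa [if_pos h'] using hc₁j i h
      · have hik : i + 1 = k₁ := by omega
        have : c₂ (i + 1 - k₁) = c₁ (i + 1) := by
          rw [show i + 1 - k₁ = 0 by omega, hc₂0, ← hc₁k, hik]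
        simp only [if_neg h']
        rw [this]; exact hc₁j i h
    · simp only [if_neg h, if_neg (show ¬ i + 1 < k₁ by omega)]
      have h2 := hc₂j (i - k₁) (by omega)
      rw [show i + 1 - k₁ = (i - k₁) + 1 by omega]
      exact h2
  have heU : ∀ i ≤ k, e i ∈ U := by
    intro i hi
    have hra : ChainReach f ε a (e i) := by
      rcases Nat.eq_zero_or_pos i with h0 | h0
      · subst h0; rw [he0]
        have h := chainReach_seg hej (show 0 < k by omega) le_rfl
        rwa [he0, hek] at h
      · have := chainReach_seg hej h0 hi
        rwa [he0] at this
    have hrb : ChainReach f ε (e i) a := by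
      rcases eq_or_lt_of_le hi with h0 | h0
      · subst h0; rw [hek]
        have h := chainReach_seg hej (show 0 < k by omega) le_rfl
        rwa [he0, hek] at h
      · have := chainReach_seg hej h0 le_rfl
        rwa [hek] at this
    exact hnear _ (chainReach_mono hεε0 hra) (chainReach_mono hεε0 hrb)
  have hpick : ∀ i : ℕ, ∃ p, i ≤ k → p ∈ C ∧ dist (e i) p < η := by
    intro i
    by_cases hi : i ≤ k
    · obtain ⟨q, hqC, hqd⟩ := mem_iUnion₂.mp (heU i hi)
      exact ⟨q, fun _ => ⟨hqC, mem_ball.mp hqd⟩⟩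
    · exact ⟨a, fun h => absurd h hi⟩
  choose p hp using hpick
  set g : ℕ → X := fun i => if i = 0 then a else if i = k₁ then b else p i with hgdef
  have hgC : ∀ i ≤ k₁, g i ∈ C := by
    intro i hi
    simp only [hgdef]
    by_cases h0 : i = 0
    · simp [h0, ha]
    · by_cases h1 : i = k₁
      · subst h1; simp [h0, hb]
      · simp only [if_neg h0, if_neg h1]
        exact (hp i (by omega)).1
  have hgd : ∀ i ≤ k₁, dist (g i) (e i) ≤ η := by
    intro i hi
    simp only [hgdef]
    by_cases h0 : i = 0
    · simp [h0, he0, hηpos.le]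
    · by_cases h1 : i = k₁
      · subst h1; simp [if_neg h0, hek₁, hηpos.le]
      · simp only [if_neg h0, if_neg h1]
        rw [dist_comm]
        exact ((hp i (by omega)).2).le
  refine ⟨k₁, hk₁, g, hgC, by simp [hgdef], ?_, ?_⟩
  · simp [hgdef, show k₁ ≠ 0 by omega]
  · intro i hi
    calc dist (f (g i)) (g (i+1))
        ≤ dist (f (g i)) (f (e i)) + dist (f (e i)) (e (i+1)) + dist (e (i+1)) (g (i+1)) :=
          dist_triangle4 _ _ _ _
    _ ≤ d/3 + d/3 + d/3 := by
        refine add_le_add (add_le_add ?_ ?_) ?_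
        · exact huc _ _ ((hgd i (by omega)).trans hηa)
        · exact (hej i (by omega)).trans (hεη.trans hηb)
        · rw [dist_comm]
          exact (hgd (i+1) (by omega)).trans hηb
    _ = d := by ring
end Compact3


/-- The `δ`-cyclic decomposition: the classes `D i` of `∼_{C,δ}` are open and
closed in `C`, are cyclically permuted by `f`, satisfy `D m = D 0`, and
partition `C`. -/
theorem stmt8 {X : Type*} [MetricSpace X] [CompactSpace X]
    (f : X → X) (hf : Continuous f) (C : Set X) (hC : IsChainComponent f C)
    (δ : ℝ) (hδ : 0 < δ) (m : ℕ) (hm : 0 < m)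
    (hm1 : ∀ k ∈ cycLengths f C δ, m ∣ k)
    (hm2 : ∀ d : ℕ, (∀ k ∈ cycLengths f C δ, d ∣ k) → d ∣ m)
    (rel : X → X → Prop)
    (hrel : ∀ x y, rel x y ↔ ∃ k, m ∣ k ∧ ChainInLen f C δ x y k)
    (x : X) (hx : x ∈ C) (D : ℕ → Set X)
    (hD : ∀ i, D i = {y | y ∈ C ∧ rel (f^[i] x) y}) :
    (∀ i, IsOpen {y : C | (y : X) ∈ D i} ∧ IsClosed {y : C | (y : X) ∈ D i}) ∧
    (∀ i, f '' D i = D ((i + 1) % m)) ∧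
    D m = D 0 ∧
    C = ⋃ i ∈ Finset.range m, D i ∧
    (∀ i < m, ∀ j < m, i ≠ j → Disjoint (D i) (D j)) := by
  obtain ⟨x0, hx0CR, hCeq⟩ := hC
  have hmaps : ∀ a ∈ C, f a ∈ C := fun a ha => component_maps hf hCeq ha
  have T : ∀ a ∈ C, ∀ b ∈ C, ∃ k, ChainInLen f C δ a b k := fun a ha b hb =>
    component_chainInReach hf hCeq ha hb hδ
  have cyc : ∀ a ∈ C, ∀ k, ChainInLen f C δ a a k → m ∣ k := fun a ha k h =>
    hm1 k ⟨a, ha, h⟩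
  have back : ∀ a b k, ChainInLen f C δ a b k →
      ∃ l, ChainInLen f C δ b a l ∧ m ∣ (k + l) := by
    intro a b k h
    obtain ⟨l, hl⟩ := T b h.mem_right a h.mem_left
    exact ⟨l, hl, cyc a h.mem_left (k + l) (h.trans hl)⟩
  have hit : ∀ j, f^[j] x ∈ C := by
    intro j
    induction j with
    | zero => simpa using hx
    | succ n ih => rw [Function.iterate_succ_apply']; exact hmaps _ ih
  have horb : ∀ i j : ℕ, 0 < j → ChainInLen f C δ (f^[i] x) (f^[i + j] x) j := by
    intro i j hj
    have h := chainInLen_orbit hδ.le hmaps (hit i) hj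
    rwa [← Function.iterate_add_apply, Nat.add_comm j i] at h
  -- rel is an equivalence on C
  have relrefl : ∀ a ∈ C, rel a a := by
    intro a ha
    obtain ⟨k, hk⟩ := T a ha a ha
    exact (hrel a a).mpr ⟨k, cyc a ha k hk, hk⟩
  have relsymm : ∀ a b, rel a b → rel b a := by
    intro a b h
    obtain ⟨k, hmk, hk⟩ := (hrel a b).mp h
    obtain ⟨l, hl, hdl⟩ := back a b k hk
    exact (hrel b a).mpr ⟨l, (Nat.dvd_add_right hmk).mp hdl, hl⟩
  have reltrans : ∀ a b c, rel a b → rel b c → rel a c := by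
    intro a b c h1 h2
    obtain ⟨k, hmk, hk⟩ := (hrel a b).mp h1
    obtain ⟨l, hml, hl⟩ := (hrel b c).mp h2
    exact (hrel a c).mpr ⟨k + l, dvd_add hmk hml, hk.trans hl⟩
  have relshift : ∀ i, rel (f^[i % m] x) (f^[i] x) := by
    intro i
    rcases Nat.lt_or_ge i m with hi | hi
    · rw [Nat.mod_eq_of_lt hi]; exact relrefl _ (hit i)
    · set t := i - i % m with htdef
      have hmod := Nat.div_add_mod i m
      have hmlt : i % m < m := Nat.mod_lt i hm
      have htpos : 0 < t := by omega
      have hteq : i % m + t = i := by omega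
      have ht : t = m * (i / m) := by omega
      have hchain := horb (i % m) t htpos
      rw [hteq] at hchain
      exact (hrel _ _).mpr ⟨t, ⟨i / m, ht⟩, hchain⟩
  have hDmod : ∀ i, D i = D (i % m) := by
    intro i
    rw [hD, hD]
    ext y
    simp only [mem_setOf_eq, and_congr_right_iff]
    intro hyC
    constructor
    · exact fun h => reltrans _ _ _ (relshift i) h
    · exact fun h => reltrans _ _ _ (relsymm _ _ (relshift i)) h
  have backShift : ∀ i : ℕ, ∃ l, ChainInLen f C δ (f^[i] x) x l ∧ m ∣ (i + l) := by
    intro i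
    rcases Nat.eq_zero_or_pos i with h0 | h0
    · subst h0
      obtain ⟨l, hl⟩ := T x hx x hx
      exact ⟨l, by simpa using hl, by simpa using cyc x hx l hl⟩
    · have hchain := horb 0 i h0
      simp only [Nat.zero_add, Function.iterate_zero_apply] at hchain
      exact back x (f^[i] x) i hchain
  have cover : ∀ y ∈ C, ∃ i < m, y ∈ D i := by
    intro y hy
    obtain ⟨k, hk⟩ := T x hx y hy
    refine ⟨k % m, Nat.mod_lt k hm, ?_⟩
    obtain ⟨l, hl, hdl⟩ := backShift (k % m)
    have hchain := hl.trans hk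
    have hdvd : m ∣ (l + k) := by
      have hmod := Nat.div_add_mod k m
      have : l + k = (k % m + l) + m * (k / m) := by omega
      rw [this]
      exact dvd_add hdl ⟨k / m, rfl⟩
    rw [hD]
    exact ⟨hy, (hrel _ _).mpr ⟨l + k, hdvd, hchain⟩⟩
  have claim : ∀ i : ℕ, ∀ y ∈ D i, ∀ l, ChainInLen f C δ y x l → m ∣ (i + l) := by
    intro i y hyD l hl
    rw [hD] at hyD
    obtain ⟨hyC, hyrel⟩ := hyD
    obtain ⟨k, hmk, hk⟩ := (hrel _ _).mp hyrel
    rcases Nat.eq_zero_or_pos i with h0 | h0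
    · subst h0
      simp only [Function.iterate_zero_apply] at hk
      have hcycle := cyc x hx (k + l) (hk.trans hl)
      have := (Nat.dvd_add_right hmk).mp hcycle
      simpa using this
    · have hchain := horb 0 i h0
      simp only [Nat.zero_add, Function.iterate_zero_apply] at hchain
      have hcycle := cyc x hx (i + (k + l)) (hchain.trans (hk.trans hl))
      have h' : m ∣ k + (i + l) := by
        have : i + (k + l) = k + (i + l) := by omega
        rwa [this] at hcycle
      exact (Nat.dvd_add_right hmk).mp h'
  have disj : ∀ i < m, ∀ j < m, i ≠ j → Disjoint (D i) (D j) := by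
    intro i hi j hj hij
    rw [Set.disjoint_left]
    intro y hyi hyj
    have hyC : y ∈ C := by rw [hD] at hyi; exact hyi.1
    obtain ⟨l, hl⟩ := T y hyC x hx
    have d1 := claim i y hyi l hl
    have d2 := claim j y hyj l hl
    have h : (i + l) ≡ (j + l) [MOD m] :=
      (Nat.modEq_zero_iff_dvd.mpr d1).trans (Nat.modEq_zero_iff_dvd.mpr d2).symm
    have h2 : i ≡ j [MOD m] := Nat.ModEq.add_right_cancel' l h
    have h3 : i % m = j % m := h2
    rw [Nat.mod_eq_of_lt hi, Nat.mod_eq_of_lt hj] at h3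
    exact hij h3
  -- one step of the dynamics
  have step : ∀ i : ℕ, ∀ y ∈ D i, f y ∈ D (i + 1) := by
    intro i y hyD
    rw [hD] at hyD
    obtain ⟨hyC, hyrel⟩ := hyD
    obtain ⟨k, hmk, hk⟩ := (hrel _ _).mp hyrel
    have hchain1 : ChainInLen f C δ (f^[i] x) (f^[i + 1] x) 1 := horb i 1 one_pos
    obtain ⟨l, hl, hdl⟩ := back _ _ 1 hchain1
    have hchainy : ChainInLen f C δ y (f y) 1 := by
      have h := chainInLen_orbit hδ.le hmaps hyC one_pos
      simpa using h
    have htot := hl.trans (hk.trans hchainy)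
    have hdvd : m ∣ l + (k + 1) := by
      have : l + (k + 1) = (1 + l) + k := by omega
      rw [this]
      exact dvd_add hdl hmk
    rw [hD]
    exact ⟨hmaps y hyC, (hrel _ _).mpr ⟨l + (k + 1), hdvd, htot⟩⟩
  have himg : ∀ i, f '' D i = D ((i + 1) % m) := by
    intro i
    apply Set.Subset.antisymm
    · rintro - ⟨y, hy, rfl⟩
      rw [← hDmod (i + 1)]
      exact step i y hy
    · intro z hz
      have hzC : z ∈ C := by
        rw [hD] at hz; exact hz.1
      obtain ⟨w, hwC, hwz⟩ := component_surj hf hCeq hzC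
      obtain ⟨j, hj, hwD⟩ := cover w hwC
      have hzj : z ∈ D ((j + 1) % m) := by
        rw [← hwz, ← hDmod (j + 1)]
        exact step j w hwD
      have heq : (j + 1) % m = (i + 1) % m := by
        by_contra hne
        have hdisj := disj _ (Nat.mod_lt _ hm) _ (Nat.mod_lt _ hm) hne
        exact (Set.disjoint_left.mp hdisj hzj) hz
      have hjeq : j = i % m := by
        have h2 : (j + 1) ≡ (i + 1) [MOD m] := by
          unfold Nat.ModEq; exact heq
        have h3 : j ≡ i [MOD m] := Nat.ModEq.add_right_cancel' 1 h2
        have h4 : j % m = i % m := h3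
        rwa [Nat.mod_eq_of_lt hj] at h4
      have hwDi : w ∈ D i := by
        rw [hDmod i, ← hjeq]; exact hwD
      exact ⟨w, hwDi, hwz⟩
  -- openness
  have hopen : ∀ i, IsOpen {y : C | (y : X) ∈ D i} := by
    intro i
    rw [Metric.isOpen_iff]
    intro y hy
    refine ⟨δ/2, by linarith, ?_⟩
    intro z hz
    rw [Metric.mem_ball, Subtype.dist_eq] at hz
    simp only [mem_setOf_eq] at hy ⊢
    rw [hD] at hy ⊢
    obtain ⟨hyC, hyrel⟩ := hy
    obtain ⟨k, hmk, hk⟩ := (hrel _ _).mp hyrel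
    obtain ⟨l, hl⟩ := component_chainInReach hf hCeq hyC hyC (show (0:ℝ) < δ/2 by linarith)
    have hml : m ∣ l := cyc _ hyC l (hl.mono (by linarith))
    have hl' : ChainInLen f C δ (y : X) (z : X) l := by
      refine chainInLen_tweak_end hl z.2 ?_ (by linarith)
      have : dist ((y : X)) ((z : X)) < δ/2 := by rwa [dist_comm] at hz
      linarith
    refine ⟨z.2, (hrel _ _).mpr ⟨k + l, dvd_add hmk hml, hk.trans hl'⟩⟩
  -- closedness
  have hclosed : ∀ i, IsClosed {y : C | (y : X) ∈ D i} := by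
    intro i
    rw [← isOpen_compl_iff]
    have hcompl : {y : C | (y : X) ∈ D i}ᶜ =
        ⋃ j ∈ {j | j < m ∧ j ≠ i % m}, {y : C | (y : X) ∈ D j} := by
      ext y
      simp only [mem_compl_iff, mem_setOf_eq, mem_iUnion, exists_prop]
      constructor
      · intro hnot
        obtain ⟨j, hj, hyD⟩ := cover (y : X) y.2
        refine ⟨j, ⟨hj, ?_⟩, hyD⟩
        intro hje
        rw [hDmod i, ← hje] at hnot
        exact hnot hyD
      · rintro ⟨j, ⟨hj, hne⟩, hyD⟩ hyi
        rw [hDmod i] at hyi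
        exact (Set.disjoint_left.mp (disj j hj _ (Nat.mod_lt _ hm) hne) hyD) hyi
    rw [hcompl]
    exact isOpen_biUnion fun j _ => hopen j
  refine ⟨fun i => ⟨hopen i, hclosed i⟩, himg, ?_, ?_, disj⟩
  · rw [hDmod m, Nat.mod_self]
  · ext y
    simp only [mem_iUnion, Finset.mem_range, exists_prop]
    constructor
    · exact cover y
    · rintro ⟨i, -, hyD⟩
      rw [hD] at hyD
      exact hyD.1
end

section
/- Let C be a chain component of a continuous map f : X → X on a compact metric space and let g = f|_C. For any x, y ∈ C: x ∼_C y (i.e., x ∼_{C,δ} y for all δ > 0) if and only if (x, y) is a chain proximal pair for g, meaning for every δ > 0 there exist δ-chains (x_i)_{i=0}^k and (y_i)_{i=0}^k of g of the same length with x_0 = x, y_0 = y, and x_k = y_k. -/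
open Filter Topology Metric Set

variable {X : Type*} [MetricSpace X]

/-- The relation `∼_{C,δ}` : there is a `δ`-chain in `C` from `x` to `y` whose
length is divisible by the gcd `m(C,δ)` of all `δ`-cycle lengths (divisibility by
the gcd is expressed via common divisors). -/
def relCdelta (f : X → X) (C : Set X) (δ : ℝ) (x y : X) : Prop :=
  ∃ k : ℕ, (∀ d : ℕ, (∀ l ∈ cycLengths f C δ, d ∣ l) → d ∣ k) ∧
    ChainInLen f C δ x y k

/-- The chain proximal relation `∼_C`. -/
def relC (f : X → X) (C : Set X) (x y : X) : Prop := ∀ δ > 0, relCdelta f C δ x y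

/-- The class of `∼_{C,δ}` containing `x`. -/
def classCdelta (f : X → X) (C : Set X) (δ : ℝ) (x : X) : Set X :=
  {y | y ∈ C ∧ relCdelta f C δ x y}

/-- The class of `∼_C` containing `x`. -/
def classC (f : X → X) (C : Set X) (x : X) : Set X :=
  {y | y ∈ C ∧ relC f C x y}

/-- The basin of attraction of a set. -/
def basin (f : X → X) (C : Set X) : Set X :=
  {x | Tendsto (fun i => infDist (f^[i] x) C) atTop (𝓝 0)}

/-- `V^s(D)` for the class `D` of `∼_C` containing the point `x ∈ C`. -/
def Vs (f : X → X) (C : Set X) (x : X) : Set X :=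
  {z | z ∈ basin f C ∧ ∀ δ > 0,
    Tendsto (fun i => infDist (f^[i] z) (f^[i] '' classCdelta f C δ x)) atTop (𝓝 0)}

lemma chainReach_mono_s9 {f : X → X} {δ δ' : ℝ} (h : δ ≤ δ') {x y : X}
    (hr : ChainReach f δ x y) : ChainReach f δ' x y := by
  obtain ⟨k, hk, c, h0, hk', hs⟩ := hr
  exact ⟨k, hk, c, h0, hk', fun i hi => (hs i hi).trans h⟩

lemma chainReach_trans {f : X → X} {δ : ℝ} {x y z : X}
    (h1 : ChainReach f δ x y) (h2 : ChainReach f δ y z) : ChainReach f δ x z := by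
  obtain ⟨k, hk, c, hc0, hck, hcs⟩ := h1
  obtain ⟨l, hl, d, hd0, hdl, hds⟩ := h2
  refine ⟨k + l, by omega, fun i => if i ≤ k then c i else d (i - k), by simp [hc0], ?_, ?_⟩
  · have : ¬ (k + l ≤ k) := by omega
    simp [this, hdl]
  · intro i hi
    rcases lt_trichotomy i k with h | h | h
    · have h1' : i ≤ k := h.le
      have h2' : i + 1 ≤ k := h
      simp only [if_pos h1', if_pos h2']
      exact hcs i h
    · subst h
      have h2' : ¬ (i + 1 ≤ i) := by omega
      simp only [le_refl, if_pos, if_neg h2', hck]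
      have : i + 1 - i = 1 := by omega
      rw [this, ← hd0]
      exact hds 0 hl
    · have h1' : ¬ (i ≤ k) := by omega
      have h2' : ¬ (i + 1 ≤ k) := by omega
      simp only [if_neg h1', if_neg h2']
      have : i + 1 - k = (i - k) + 1 := by omega
      rw [this]
      exact hds (i - k) (by omega)

lemma chainInLen_trans {f : X → X} {C : Set X} {δ : ℝ} {a b e : X} {k l : ℕ}
    (h1 : ChainInLen f C δ a b k) (h2 : ChainInLen f C δ b e l) :
    ChainInLen f C δ a e (k + l) := by
  obtain ⟨hk, c, hcm, hc0, hck, hcs⟩ := h1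
  obtain ⟨hl, d, hdm, hd0, hdl, hds⟩ := h2
  refine ⟨by omega, fun i => if i ≤ k then c i else d (i - k), ?_, by simp [hc0], ?_, ?_⟩
  · intro i hi
    by_cases h : i ≤ k
    · simpa [h] using hcm i h
    · simp only [if_neg h]
      exact hdm (i - k) (by omega)
  · have : ¬ (k + l ≤ k) := by omega
    simp [this, hdl]
  · intro i hi
    rcases lt_trichotomy i k with h | h | h
    · have h1' : i ≤ k := h.le
      have h2' : i + 1 ≤ k := h
      simp only [if_pos h1', if_pos h2']
      exact hcs i h
    · subst h
      have h2' : ¬ (i + 1 ≤ i) := by omega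
      simp only [le_refl, if_pos, if_neg h2', hck]
      have : i + 1 - i = 1 := by omega
      rw [this, ← hd0]
      exact hds 0 hl
    · have h1' : ¬ (i ≤ k) := by omega
      have h2' : ¬ (i + 1 ≤ k) := by omega
      simp only [if_neg h1', if_neg h2']
      have : i + 1 - k = (i - k) + 1 := by omega
      rw [this]
      exact hds (i - k) (by omega)

lemma mem_comp_iff {f : X → X} {C : Set X} (hC : IsChainComponent f C) {x : X} (hx : x ∈ C)
    (z : X) : z ∈ C ↔ ∀ ε > 0, ChainReach f ε x z ∧ ChainReach f ε z x := by
  obtain ⟨x₀, hx₀, rfl⟩ := hC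
  obtain ⟨-, hx1, hx2⟩ := hx
  constructor
  · rintro ⟨hzCR, hz1, hz2⟩ ε hε
    exact ⟨chainReach_trans (hx2 ε hε) (hz1 ε hε), chainReach_trans (hz2 ε hε) (hx1 ε hε)⟩
  · intro h
    exact ⟨fun ε hε => chainReach_trans (h ε hε).2 (h ε hε).1,
      fun ε hε => chainReach_trans (hx1 ε hε) (h ε hε).1,
      fun ε hε => chainReach_trans (h ε hε).2 (hx2 ε hε)⟩

lemma unif {f : X → X} [CompactSpace X] (hf : Continuous f) {η : ℝ} (hη : 0 < η) :
    ∃ ρ > 0, ∀ u v : X, dist u v < ρ → dist (f u) (f v) < η := by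
  have := CompactSpace.uniformContinuous_of_continuous hf
  rw [Metric.uniformContinuous_iff] at this
  obtain ⟨ρ, hρ, h⟩ := this η hη
  exact ⟨ρ, hρ, fun u v huv => h huv⟩

lemma near_comp {f : X → X} [CompactSpace X] (hf : Continuous f) {C : Set X}
    (hC : IsChainComponent f C) {x : X} (hx : x ∈ C) :
    ∀ ε > 0, ∃ δ > 0, δ ≤ ε ∧ ∀ a ∈ C, ∀ b ∈ C, ∀ (k : ℕ) (c : ℕ → X), c 0 = a → c k = b →
      (∀ i < k, dist (f (c i)) (c (i + 1)) ≤ δ) → ∀ i ≤ k, infDist (c i) C < ε := by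
  intro ε hε
  by_contra hcon
  push_neg at hcon
  -- for every n, there is a point z on a fine chain between points of C with infDist ≥ ε
  have key : ∀ n : ℕ, ∃ z : X, ε ≤ infDist z C ∧
      ChainReach f (1 / (n + 1)) x z ∧ ChainReach f (1 / (n + 1)) z x := by
    intro n
    have hδpos : (0:ℝ) < min ε (1 / (n + 1)) := by
      apply lt_min hε
      positivity
    obtain ⟨a, ha, b, hb, k, c, hc0, hck, hcs, i, hik, hzfar⟩ :=
      hcon (min ε (1 / (n + 1))) hδpos (min_le_left _ _)
    have hδle : min ε (1 / (n + 1)) ≤ 1 / (n + 1) := min_le_right _ _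
    have hainf : infDist a C = 0 := infDist_zero_of_mem ha
    have hbinf : infDist b C = 0 := infDist_zero_of_mem hb
    have hi0 : 0 < i := by
      rcases Nat.eq_zero_or_pos i with h | h
      · exfalso; rw [h, hc0, hainf] at hzfar; linarith
      · exact h
    have hikl : i < k := by
      rcases lt_or_eq_of_le hik with h | h
      · exact h
      · exfalso; rw [h, hck, hbinf] at hzfar; linarith
    refine ⟨c i, hzfar, ?_, ?_⟩
    · -- x → a → c i
      have h1 : ChainReach f (1 / (n + 1)) x a :=
        ((mem_comp_iff hC hx a).mp ha (1 / (n + 1)) (by positivity)).1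
      have h2 : ChainReach f (1 / (n + 1)) a (c i) :=
        ⟨i, hi0, c, hc0, rfl, fun j hj => (hcs j (by omega)).trans hδle⟩
      exact chainReach_trans h1 h2
    · -- c i → b → x
      have h1 : ChainReach f (1 / (n + 1)) (c i) b := by
        refine ⟨k - i, by omega, fun j => c (i + j), by simp, ?_, ?_⟩
        · show c (i + (k - i)) = b
          rw [Nat.add_sub_cancel' hik, hck]
        · intro j hj
          show dist (f (c (i + j))) (c (i + (j + 1))) ≤ 1 / (n + 1)
          have h3 : i + (j + 1) = i + j + 1 := by omega
          rw [h3]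
          exact (hcs (i + j) (by omega)).trans hδle
      have h2 : ChainReach f (1 / (n + 1)) b x :=
        ((mem_comp_iff hC hx b).mp hb (1 / (n + 1)) (by positivity)).2
      exact chainReach_trans h1 h2
  choose z hzfar hzto hzfrom using key
  obtain ⟨zl, -, φ, hφ, hlim⟩ := isCompact_univ.tendsto_subseq (fun n : ℕ => mem_univ (z n))
  -- zl ∈ C
  have hzl : zl ∈ C := by
    rw [mem_comp_iff hC hx]
    intro η hη
    obtain ⟨ρ, hρ, hρf⟩ := unif hf (half_pos hη)
    obtain ⟨n₀, hn₀⟩ := exists_nat_one_div_lt (half_pos hη)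
    have hmin : 0 < min ρ (η / 2) := lt_min hρ (half_pos hη)
    obtain ⟨N, hN⟩ := Metric.tendsto_atTop.mp hlim (min ρ (η / 2)) hmin
    set n := max N n₀ with hn
    have hdist : dist (z (φ n)) zl < min ρ (η / 2) := hN n (le_max_left _ _)
    have hφn : (1 : ℝ) / (φ n + 1) ≤ η / 2 := by
      have h1 : (n₀ : ℕ) ≤ φ n := le_trans (le_max_right N n₀) (hφ.le_apply)
      have h2 : (1 : ℝ) / (φ n + 1) ≤ 1 / (n₀ + 1) := by
        apply one_div_le_one_div_of_le (by positivity)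
        have h3 : (n₀ : ℝ) ≤ φ n := Nat.cast_le.mpr h1
        linarith
      exact h2.trans hn₀.le
    constructor
    · -- x → zl : modify endpoint of a chain x → z (φ n)
      obtain ⟨k, hk, c, hc0, hck, hcs⟩ := hzto (φ n)
      refine ⟨k, hk, fun j => if j < k then c j else zl, ?_, by simp, ?_⟩
      · simp [hk, hc0]
      · intro j hj
        rcases Nat.lt_or_ge (j + 1) k with h | h
        · simp only [if_pos hj, if_pos h]
          exact (hcs j hj).trans (by linarith)
        · have hjk : j + 1 = k := by omega
          simp only [if_pos hj, if_neg (by omega : ¬ (j + 1 < k))]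
          calc dist (f (c j)) zl ≤ dist (f (c j)) (c (j+1)) + dist (c (j+1)) zl :=
                dist_triangle _ _ _
            _ ≤ 1 / (φ n + 1) + dist (z (φ n)) zl := by
                rw [hjk, hck]
                have h5 := hcs j hj
                rw [hjk, hck] at h5
                exact add_le_add h5 le_rfl
            _ ≤ η / 2 + η / 2 := by
                have := hdist.trans_le (min_le_right _ _)
                linarith
            _ = η := by ring
    · -- zl → x : modify start of a chain z (φ n) → x
      obtain ⟨k, hk, c, hc0, hck, hcs⟩ := hzfrom (φ n)
      refine ⟨k, hk, fun j => if j = 0 then zl else c j, by simp, ?_, ?_⟩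
      · simp only [if_neg (by omega : ¬ k = 0)]
        exact hck
      · intro j hj
        rcases Nat.eq_zero_or_pos j with h | h
        · subst h
          simp only [if_pos rfl, if_neg (by omega : ¬ (0 + 1 = 0))]
          have hfd : dist (f zl) (f (c 0)) < η / 2 := by
            apply hρf
            rw [hc0, dist_comm]
            exact hdist.trans_le (min_le_left _ _)
          calc dist (f zl) (c 1) ≤ dist (f zl) (f (c 0)) + dist (f (c 0)) (c 1) :=
                dist_triangle _ _ _
            _ ≤ η / 2 + 1 / (φ n + 1) := by
                have := hcs 0 hk
                push_cast at this ⊢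
                linarith
            _ ≤ η / 2 + η / 2 := by linarith
            _ = η := by ring
        · simp only [if_neg (by omega : ¬ j = 0), if_neg (by omega : ¬ (j + 1 = 0))]
          exact (hcs j hj).trans (by linarith)
  -- contradiction : ε ≤ infDist zl C = 0
  have hcont : Tendsto (fun n => infDist (z (φ n)) C) atTop (𝓝 (infDist zl C)) :=
    ((continuous_infDist_pt C).tendsto zl).comp hlim
  have hle : ε ≤ infDist zl C := ge_of_tendsto' hcont (fun n => hzfar (φ n))
  rw [infDist_zero_of_mem hzl] at hle
  linarith

open Classical in
lemma chainIn {f : X → X} [CompactSpace X] (hf : Continuous f) {C : Set X}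
    (hC : IsChainComponent f C) {x : X} (hx : x ∈ C) :
    ∀ ε > 0, ∀ a ∈ C, ∀ b ∈ C, ∃ k, ChainInLen f C ε a b k := by
  intro ε hε a ha b hb
  obtain ⟨ρ, hρ, hρf⟩ := unif hf (by linarith : (0:ℝ) < ε / 3)
  set ε' := min ρ (ε / 3) with hε'
  have hε'pos : 0 < ε' := lt_min hρ (by linarith)
  obtain ⟨δ, hδ, hδε', hnear⟩ := near_comp hf hC hx ε' hε'pos
  -- a δ-chain a → x → b
  have hab : ChainReach f δ a b :=
    chainReach_trans ((mem_comp_iff hC hx a).mp ha δ hδ).2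
      ((mem_comp_iff hC hx b).mp hb δ hδ).1
  obtain ⟨k, hk, c, hc0, hck, hcs⟩ := hab
  have hptsnear : ∀ i ≤ k, infDist (c i) C < ε' := hnear a ha b hb k c hc0 hck hcs
  -- projection to C
  set w : ℕ → X := fun i => if h : ∃ v ∈ C, dist (c i) v < ε' then h.choose else x with hw
  have hwC : ∀ i, w i ∈ C := by
    intro i
    rw [hw]
    by_cases h : ∃ v ∈ C, dist (c i) v < ε'
    · simp only [dif_pos h]
      exact h.choose_spec.1
    · simp only [dif_neg h]
      exact hx
  have hwdist : ∀ i ≤ k, dist (c i) (w i) < ε' := by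
    intro i hi
    have hex : ∃ v ∈ C, dist (c i) v < ε' :=
      (infDist_lt_iff ⟨x, hx⟩).mp (hptsnear i hi)
    rw [hw]
    simp only [dif_pos hex]
    exact hex.choose_spec.2
  set c' : ℕ → X := fun i => if i = 0 then a else if k ≤ i then b else w i with hc'
  have hc'C : ∀ i, c' i ∈ C := by
    intro i
    rw [hc']
    by_cases h0 : i = 0
    · simp only [if_pos h0]; exact ha
    · by_cases hik : k ≤ i
      · simp only [if_neg h0, if_pos hik]; exact hb
      · simp only [if_neg h0, if_neg hik]; exact hwC i
  have hc'dist : ∀ i ≤ k, dist (c i) (c' i) < ε' := by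
    intro i hi
    rw [hc']
    by_cases h0 : i = 0
    · subst h0; simp [hc0, hε'pos]
    · by_cases hik : k ≤ i
      · have : i = k := le_antisymm hi hik
        subst this
        simp only [if_neg h0, if_pos hik, hck]
        simpa using hε'pos
      · simp only [if_neg h0, if_neg hik]
        exact hwdist i hi
  refine ⟨k, hk, c', fun i _ => hc'C i, by simp [hc'], ?_, ?_⟩
  · rw [hc']
    simp only [if_neg (by omega : ¬ k = 0), if_pos le_rfl]
  · intro i hi
    have h1 : dist (c' i) (c i) < ρ := by
      rw [dist_comm]
      exact lt_of_lt_of_le (hc'dist i hi.le) (min_le_left _ _)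
    have h2 : dist (f (c' i)) (f (c i)) < ε / 3 := hρf _ _ h1
    have h3 : dist (f (c i)) (c (i + 1)) ≤ δ := hcs i hi
    have h4 : dist (c (i + 1)) (c' (i + 1)) < ε' := hc'dist (i + 1) hi
    have h5 : ε' ≤ ε / 3 := min_le_right _ _
    calc dist (f (c' i)) (c' (i + 1)) ≤
        dist (f (c' i)) (f (c i)) + dist (f (c i)) (c (i + 1)) + dist (c (i + 1)) (c' (i + 1)) :=
          dist_triangle4 _ _ _ _
      _ ≤ ε / 3 + ε / 3 + ε / 3 := by
          have := hδε'.trans h5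
          linarith
      _ = ε := by ring

lemma smul_mem_of_add {S : Set ℕ} (hadd : ∀ a ∈ S, ∀ b ∈ S, a + b ∈ S) :
    ∀ q, 0 < q → ∀ c ∈ S, q * c ∈ S := by
  intro q hq c hc
  induction q with
  | zero => omega
  | succ n ih =>
    rcases Nat.eq_zero_or_pos n with h | h
    · simpa [h] using hc
    · have := hadd _ (ih h) _ hc
      simpa [Nat.succ_mul] using this

lemma numerical (S : Set ℕ) (hne : S.Nonempty) (hpos : ∀ l ∈ S, 0 < l)
    (hadd : ∀ a ∈ S, ∀ b ∈ S, a + b ∈ S) :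
    ∃ g N : ℕ, 0 < g ∧ (∀ l ∈ S, g ∣ l) ∧ (∀ n, N ≤ n → g ∣ n → n ∈ S) := by
  obtain ⟨a, ha⟩ := hne
  set A : Set ℕ := {n | 0 < n ∧ ∃ s ∈ S, ∃ t ∈ S, s = t + n} with hA
  have hSA : ∀ l ∈ S, l ∈ A := fun l hl =>
    ⟨hpos l hl, a + l, hadd a ha l hl, a, ha, by omega⟩
  have hAne : A.Nonempty := ⟨a, hSA a ha⟩
  set g := sInf A with hg
  obtain ⟨hgpos, s, hs, t, ht, hst⟩ : g ∈ A := Nat.sInf_mem hAne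
  have hdvd : ∀ l ∈ S, g ∣ l := by
    intro l hl
    rcases Nat.eq_zero_or_pos (l % g) with h | h
    · exact Nat.dvd_of_mod_eq_zero h
    · exfalso
      set r := l % g with hr
      set q := l / g with hq
      have hlqr : g * q + r = l := Nat.div_add_mod l g
      have hrg : r < g := Nat.mod_lt l hgpos
      rcases Nat.eq_zero_or_pos q with hq0 | hq0
      · -- l = r < g but l ∈ A so g ≤ l
        have h1 : g ≤ l := Nat.sInf_le (hSA l hl)
        have h2 : g * q = 0 := by rw [hq0, Nat.mul_zero]
        omega
      · have hu : l + q * t ∈ S := hadd l hl _ (smul_mem_of_add hadd q hq0 t ht)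
        have hv : q * s ∈ S := smul_mem_of_add hadd q hq0 s hs
        have heq : l + q * t = q * s + r := by
          have h1 : q * s = q * t + q * g := by rw [hst]; ring
          have h2 : g * q = q * g := Nat.mul_comm g q
          omega
        have : r ∈ A := ⟨h, l + q * t, hu, q * s, hv, by omega⟩
        have := Nat.sInf_le this
        omega
  have hgt : g ∣ t := hdvd t ht
  obtain ⟨w, hw⟩ := hgt
  have hwpos : 0 < w := by
    have := hpos t ht
    rcases Nat.eq_zero_or_pos w with h | h
    · rw [h, Nat.mul_zero] at hw; omega
    · exact h
  refine ⟨g, g * w * w, hgpos, hdvd, ?_⟩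
  intro n hn hgn
  obtain ⟨p, hp⟩ := hgn
  have hpw : w * w ≤ p := by
    have : g * (w * w) ≤ g * p := by rw [← hp]; nlinarith
    exact Nat.le_of_mul_le_mul_left this hgpos
  set α := p / w with hα
  set β := p % w with hβ
  have hpαβ : w * α + β = p := Nat.div_add_mod p w
  have hβw : β < w := Nat.mod_lt p hwpos
  have hαw : w ≤ α := by
    rw [hα]
    exact Nat.le_div_iff_mul_le hwpos |>.mpr (by nlinarith)
  have hαβ : β < α := lt_of_lt_of_le hβw hαw
  -- n = β * s + (α - β) * t
  have key : n = β * s + (α - β) * t := by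
    have h1 : (α - β) * t = α * t - β * t := by
      rw [Nat.sub_mul]
    have hβt : β * t ≤ α * t := Nat.mul_le_mul_right t hαβ.le
    rw [h1, hst]
    -- β * (t + g) + (α * t - β * t) = α*t + β*g
    have : β * (t + g) + (α * t - β * t) = α * t + β * g := by
      rw [Nat.mul_add]
      omega
    rw [this, hw, hp]
    ring_nf
    nlinarith [hpαβ]
  rcases Nat.eq_zero_or_pos β with hβ0 | hβ0
  · rw [key, hβ0]
    simpa using smul_mem_of_add hadd (α - 0) (by omega) t ht
  · rw [key]
    exact hadd _ (smul_mem_of_add hadd β hβ0 s hs) _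
      (smul_mem_of_add hadd (α - β) (by omega) t ht)

/-- `x ∼_C y` iff `(x,y)` is a chain proximal pair for `f|_C`. -/
theorem stmt9 {X : Type*} [MetricSpace X] [CompactSpace X]
    (f : X → X) (hf : Continuous f) (C : Set X) (hC : IsChainComponent f C)
    (x : X) (hx : x ∈ C) (y : X) (hy : y ∈ C) :
    relC f C x y ↔
      ∀ δ > 0, ∃ k : ℕ, 0 < k ∧ ∃ c c' : ℕ → X,
        (∀ i ≤ k, c i ∈ C ∧ c' i ∈ C) ∧ c 0 = x ∧ c' 0 = y ∧ c k = c' k ∧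
        ∀ i < k, dist (f (c i)) (c (i + 1)) ≤ δ ∧
          dist (f (c' i)) (c' (i + 1)) ≤ δ := by
  have htrans := chainIn hf hC hx
  constructor
  · intro h δ hδ
    obtain ⟨k, hdvd, hxy⟩ := h δ hδ
    set Sy : Set ℕ := {n | ChainInLen f C δ y y n} with hSy
    obtain ⟨n₀, hn₀⟩ := htrans δ hδ y hy y hy
    obtain ⟨g, N, hg, hgdvd, hgev⟩ := numerical Sy ⟨n₀, hn₀⟩ (fun l hl => hl.1)
      (fun a ha b hb => chainInLen_trans ha hb)
    have hgall : ∀ l ∈ cycLengths f C δ, g ∣ l := by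
      rintro l ⟨u, hu, hcyc⟩
      obtain ⟨p, hp⟩ := htrans δ hδ y hy u hu
      obtain ⟨q, hq⟩ := htrans δ hδ u hu y hy
      have h1 : g ∣ p + q := hgdvd _ (chainInLen_trans hp hq)
      have h2 : g ∣ p + l + q := hgdvd _ (chainInLen_trans (chainInLen_trans hp hcyc) hq)
      have h3 : g ∣ (p + q) + l := by
        have : (p + q) + l = p + l + q := by omega
        rw [this]; exact h2
      exact (Nat.dvd_add_right h1).mp h3
    have hgk : g ∣ k := hdvd g hgall
    set n₁ := g * (N + 1) with hn₁
    have hn₁N : N ≤ n₁ := by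
      calc N ≤ N + 1 := by omega
        _ ≤ g * (N + 1) := Nat.le_mul_of_pos_left _ hg
    have h1 : ChainInLen f C δ y y n₁ := hgev n₁ hn₁N ⟨N + 1, rfl⟩
    have h2 : ChainInLen f C δ y y (k + n₁) :=
      hgev _ (le_trans hn₁N (Nat.le_add_left _ _)) (Nat.dvd_add hgk ⟨N + 1, rfl⟩)
    obtain ⟨hpos, c, hcmem, hc0, hck, hcs⟩ := chainInLen_trans hxy h1
    obtain ⟨-, c', hcmem', hc0', hck', hcs'⟩ := h2
    exact ⟨k + n₁, hpos, c, c', fun i hi => ⟨hcmem i hi, hcmem' i hi⟩, hc0, hc0',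
      by rw [hck, hck'], fun i hi => ⟨hcs i hi, hcs' i hi⟩⟩
  · intro h δ hδ
    obtain ⟨k, hk, c, c', hmem, hc0, hc0', hckeq, hs⟩ := h δ hδ
    have hz : c k ∈ C := (hmem k le_rfl).1
    obtain ⟨q, hq⟩ := htrans δ hδ (c k) hz y hy
    have hxz : ChainInLen f C δ x (c k) k :=
      ⟨hk, c, fun i hi => (hmem i hi).1, hc0, rfl, fun i hi => (hs i hi).1⟩
    have hyz : ChainInLen f C δ y (c k) k :=
      ⟨hk, c', fun i hi => (hmem i hi).2, hc0', hckeq.symm, fun i hi => (hs i hi).2⟩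
    refine ⟨k + q, fun d hd => ?_, chainInLen_trans hxz hq⟩
    exact hd _ ⟨y, hy, chainInLen_trans hyz hq⟩
end
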